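/- Let G be a finite simple graph with vertex set V and edge set E, and let f_1,…,f_s denote the polynomials of the 3-coloring polynomial system of G over the field F₂ = ZMod 2. Then G is not 3-colorable if and only if there exist polynomials β_1,…,β_s ∈ F₂[x_v : v ∈ V] with 1 = Σ_{i=1}^s β_i f_i. -/

import Mathlib

noncomputable section CertAux

open MvPolynomial

private abbrev Kbar := AlgebraicClosure (ZMod 2)

private def piK : Kbar →ₗ[ZMod 2] (ZMod 2) := by
  have hs : LinearIndepOn (ZMod 2) id ({(1:Kbar)} : Set Kbar) :=
    (linearIndepOn_singleton_iff (ZMod 2)).mpr one_ne_zero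
  exact (Module.Basis.extend hs).coord ⟨1, hs.subset_extend _ rfl⟩

private lemma piK_one : piK 1 = 1 := by
  have hs : LinearIndepOn (ZMod 2) id ({(1:Kbar)} : Set Kbar) :=
    (linearIndepOn_singleton_iff (ZMod 2)).mpr one_ne_zero
  show (Module.Basis.extend hs).coord ⟨1, hs.subset_extend _ rfl⟩ 1 = 1
  have h1 : (Module.Basis.extend hs) ⟨1, hs.subset_extend _ rfl⟩ = 1 := Module.Basis.extend_apply_self hs _
  have h2 : (Module.Basis.extend hs).coord ⟨1, hs.subset_extend _ rfl⟩
      ((Module.Basis.extend hs) ⟨1, hs.subset_extend _ rfl⟩) = 1 := by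
    rw [Module.Basis.coord_apply, Module.Basis.repr_self, Finsupp.single_eq_same]
  rw [h1] at h2
  exact h2

variable {V : Type*} [DecidableEq V]

private def PiP (V : Type*) (π : Kbar →ₗ[ZMod 2] ZMod 2) :
    MvPolynomial V Kbar →+ MvPolynomial V (ZMod 2) :=
  AddMonoidAlgebra.coeffAddEquiv.symm.toAddMonoidHom.comp
    ((Finsupp.mapRange.addMonoidHom π.toAddMonoidHom).comp
      AddMonoidAlgebra.coeffAddEquiv.toAddMonoidHom)

private lemma coeff_PiP (π : Kbar →ₗ[ZMod 2] ZMod 2) (p : MvPolynomial V Kbar) (m : V →₀ ℕ) :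
    coeff m (PiP V π p) = π (coeff m p) :=
  Finsupp.mapRange_apply (f := ⇑π) (hf := π.map_zero) (g := AddMonoidAlgebra.coeff p) (a := m)

private lemma PiP_one (π : Kbar →ₗ[ZMod 2] ZMod 2) (hπ : π 1 = 1) :
    PiP V π 1 = 1 := by
  apply MvPolynomial.ext
  intro m
  rw [coeff_PiP, coeff_one, coeff_one]
  split <;> simp [hπ]

private lemma PiP_map_mul (π : Kbar →ₗ[ZMod 2] ZMod 2) (f : MvPolynomial V (ZMod 2))
    (g : MvPolynomial V Kbar) :
    PiP V π (MvPolynomial.map (algebraMap (ZMod 2) Kbar) f * g) = f * PiP V π g := by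
  apply MvPolynomial.ext
  intro m
  rw [coeff_PiP, coeff_mul, coeff_mul, map_sum]
  refine Finset.sum_congr rfl fun x _ => ?_
  rw [coeff_map, coeff_PiP, ← Algebra.smul_def, map_smul, smul_eq_mul]

/-- Descent: a Nullstellensatz certificate over the algebraic closure descends to `𝔽₂`. -/
private lemma descend (I : Ideal (MvPolynomial V (ZMod 2)))
    (h : 1 ∈ I.map (MvPolynomial.map (algebraMap (ZMod 2) Kbar))) : 1 ∈ I := by
  rw [Ideal.map] at h
  obtain ⟨n, cf, g, hg⟩ := Submodule.mem_span_set'.mp h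
  have h1 : (1 : MvPolynomial V (ZMod 2)) =
      PiP V piK (∑ i, cf i • (g i : MvPolynomial V Kbar)) := by
    rw [hg]; exact (PiP_one piK piK_one).symm
  rw [map_sum] at h1
  rw [h1]
  refine Submodule.sum_mem _ fun i _ => ?_
  obtain ⟨f, hfI, hf⟩ := (g i).2
  rw [smul_eq_mul, mul_comm, ← hf, PiP_map_mul]
  exact I.mul_mem_right _ hfI

private def edgePoly : Sym2 V → MvPolynomial V (ZMod 2) :=
  Sym2.lift ⟨fun u w => X u ^ 2 + X u * X w + X w ^ 2, fun u w => by ring⟩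

variable [Fintype V] [DecidableEq V] (G : SimpleGraph V) [DecidableRel G.Adj]

private def gens : (V ⊕ {e : Sym2 V // e ∈ G.edgeFinset}) → MvPolynomial V (ZMod 2) :=
  Sum.elim (fun v => X v ^ 3 + 1) (fun e => edgePoly e.1)

end CertAux

open MvPolynomial in
set_option maxHeartbeats 1000000 in
theorem not_three_colorable_iff_F2_certificate
    {V : Type*} [Fintype V] [DecidableEq V] (G : SimpleGraph V) [DecidableRel G.Adj] :
    ¬ G.Colorable 3 ↔
      ∃ (β : V → MvPolynomial V (ZMod 2)) (γ : Sym2 V → MvPolynomial V (ZMod 2)),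
        (1 : MvPolynomial V (ZMod 2)) =
          (∑ v : V, β v * (MvPolynomial.X v ^ 3 + 1)) +
          ∑ e ∈ G.edgeFinset, γ e *
            Sym2.lift ⟨fun u w =>
                MvPolynomial.X u ^ 2 + MvPolynomial.X u * MvPolynomial.X w +
                  MvPolynomial.X w ^ 2,
              fun u w => by ring⟩ e := by
  classical
  -- basic arithmetic facts in the algebraic closure of 𝔽₂
  have h2 : (2 : Kbar) = 0 := by
    calc (2 : Kbar) = algebraMap (ZMod 2) Kbar 2 := (map_ofNat _ 2).symm
    _ = algebraMap (ZMod 2) Kbar 0 := by rw [show (2 : ZMod 2) = 0 by decide]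
    _ = 0 := map_zero _
  have hdeg : (Polynomial.X ^ 2 + Polynomial.X + Polynomial.C (1 : Kbar)).degree = 2 := by
    compute_degree!
  obtain ⟨ζ, hζroot⟩ := IsAlgClosed.exists_root
    (p := Polynomial.X ^ 2 + Polynomial.X + Polynomial.C (1 : Kbar))
    (by rw [hdeg]; norm_num)
  have hζ : ζ ^ 2 + ζ + 1 = 0 := by
    simpa [Polynomial.IsRoot] using hζroot
  have hζ1 : ζ ≠ 1 := by
    intro h; rw [h] at hζ
    exact one_ne_zero (α := Kbar) (by linear_combination hζ - h2)
  have hζ0 : ζ ≠ 0 := by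
    intro h; rw [h] at hζ
    exact one_ne_zero (α := Kbar) (by linear_combination hζ)
  have hζ11 : ζ + 1 ≠ 1 := by
    intro h; exact hζ0 (by linear_combination h)
  have hζζ : ζ + 1 ≠ ζ := by
    intro h; exact one_ne_zero (α := Kbar) (by linear_combination h)
  -- the three "colors" in Kbar
  set q : Fin 3 → Kbar := ![1, ζ, ζ + 1] with hqdef
  have hq3 : ∀ i : Fin 3, q i ^ 3 = 1 := by
    intro i
    fin_cases i
    · show (1 : Kbar) ^ 3 = 1; norm_num
    · show ζ ^ 3 = 1; linear_combination (ζ - 1) * hζ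
    · show (ζ + 1) ^ 3 = 1; linear_combination (ζ + 2) * hζ - h2
  have hqe : ∀ i j : Fin 3, i ≠ j → q i ^ 2 + q i * q j + q j ^ 2 = 0 := by
    intro i j hne
    fin_cases i <;> fin_cases j
    · exact absurd rfl hne
    · show (1:Kbar) ^ 2 + 1 * ζ + ζ ^ 2 = 0; linear_combination hζ
    · show (1:Kbar) ^ 2 + 1 * (ζ + 1) + (ζ + 1) ^ 2 = 0
      linear_combination hζ + (ζ + 1) * h2
    · show ζ ^ 2 + ζ * 1 + (1:Kbar) ^ 2 = 0; linear_combination hζ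
    · exact absurd rfl hne
    · show ζ ^ 2 + ζ * (ζ + 1) + (ζ + 1) ^ 2 = 0; linear_combination 3 * hζ - h2
    · show (ζ + 1) ^ 2 + (ζ + 1) * 1 + (1:Kbar) ^ 2 = 0
      linear_combination hζ + (ζ + 1) * h2
    · show (ζ + 1) ^ 2 + (ζ + 1) * ζ + ζ ^ 2 = 0; linear_combination 3 * hζ - h2
    · exact absurd rfl hne
  constructor
  · -- no 3-coloring ⟹ certificate
    intro hn
    have hmem : (1 : MvPolynomial V (ZMod 2)) ∈ Ideal.span (Set.range (gens G)) := by
      refine descend _ ?_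
      -- the extended ideal has empty zero locus
      have hempty : zeroLocus Kbar (Ideal.map (MvPolynomial.map (algebraMap (ZMod 2) Kbar))
          (Ideal.span (Set.range (gens G)))) = ∅ := by
        rw [Set.eq_empty_iff_forall_notMem]
        intro x hx
        rw [mem_zeroLocus_iff] at hx
        have hv1 : ∀ v : V, x v ^ 3 = 1 := by
          intro v
          have h := hx _ (Ideal.mem_map_of_mem (MvPolynomial.map (algebraMap (ZMod 2) Kbar))
            (Ideal.subset_span ⟨Sum.inl v, rfl⟩))
          simp only [gens, Sum.elim_inl, map_add, map_pow, MvPolynomial.map_X, map_one,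
            aeval_X, coe_aeval_eq_eval, eval_add, eval_pow, eval_X] at h
          linear_combination h - h2
        have hE : ∀ u w : V, G.Adj u w → x u ^ 2 + x u * x w + x w ^ 2 = 0 := by
          intro u w huw
          have hmemE : s(u, w) ∈ G.edgeFinset := by
            rwa [SimpleGraph.mem_edgeFinset, SimpleGraph.mem_edgeSet]
          have h := hx _ (Ideal.mem_map_of_mem (MvPolynomial.map (algebraMap (ZMod 2) Kbar))
            (Ideal.subset_span ⟨Sum.inr ⟨s(u, w), hmemE⟩, rfl⟩))
          simpa only [gens, Sum.elim_inr, edgePoly, Sym2.lift_mk, map_add, map_mul, map_pow,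
            MvPolynomial.map_X, aeval_X, coe_aeval_eq_eval, eval_add, eval_mul, eval_pow, eval_X] using h
        have hne : ∀ u w : V, G.Adj u w → x u ≠ x w := by
          intro u w huw heq
          have h3 := hE u w huw
          rw [← heq] at h3
          have hx0 : x u ^ 2 = 0 := by linear_combination h3 - x u ^ 2 * h2
          have hxu : x u = 0 := (pow_eq_zero_iff (two_ne_zero)).mp hx0
          have h1 := hv1 u
          rw [hxu] at h1
          simp at h1
        have hmemroots : ∀ v : V, x v = 1 ∨ x v = ζ ∨ x v = ζ + 1 := by
          intro v
          have hP : (x v - 1) * ((x v - ζ) * (x v - (ζ + 1))) = 0 := by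
            linear_combination hv1 v + (x v - 1) * hζ +
              (-(ζ + 1) * x v ^ 2 + ζ * x v + 1) * h2
          rcases mul_eq_zero.mp hP with h | h
          · exact Or.inl (sub_eq_zero.mp h)
          · rcases mul_eq_zero.mp h with h' | h'
            · exact Or.inr (Or.inl (sub_eq_zero.mp h'))
            · exact Or.inr (Or.inr (sub_eq_zero.mp h'))
        -- build a 3-coloring, contradiction
        let cfun : Kbar → Fin 3 := fun y => if y = 1 then 0 else if y = ζ then 1 else 2
        have c1 : cfun 1 = 0 := if_pos rfl
        have cζ : cfun ζ = 1 := by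
          show (if ζ = 1 then (0 : Fin 3) else if ζ = ζ then 1 else 2) = 1
          rw [if_neg hζ1, if_pos rfl]
        have cζ1 : cfun (ζ + 1) = 2 := by
          show (if ζ + 1 = 1 then (0 : Fin 3) else if ζ + 1 = ζ then 1 else 2) = 2
          rw [if_neg hζ11, if_neg hζζ]
        have hvalid : ∀ {a b : V}, G.Adj a b → cfun (x a) ≠ cfun (x b) := by
          intro a b hab hcc
          refine hne a b hab ?_
          rcases hmemroots a with ha | ha | ha <;> rcases hmemroots b with hb | hb | hb <;>
              rw [ha, hb] at hcc ⊢ <;>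
            simp only [c1, cζ, cζ1] at hcc <;>
            exact absurd hcc (by decide)
        exact hn ⟨SimpleGraph.Coloring.mk (fun v => cfun (x v)) hvalid⟩
      have hrad : (Ideal.map (MvPolynomial.map (algebraMap (ZMod 2) Kbar))
          (Ideal.span (Set.range (gens G)))).radical = ⊤ := by
        rw [← vanishingIdeal_zeroLocus_eq_radical (K := Kbar), hempty, vanishingIdeal_empty]
      rw [Ideal.radical_eq_top.mp hrad]
      exact Submodule.mem_top
    rw [Ideal.mem_span_range_iff_exists_fun] at hmem
    obtain ⟨c, hc⟩ := hmem
    refine ⟨fun v => c (Sum.inl v),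
      fun e => if he : e ∈ G.edgeFinset then c (Sum.inr ⟨e, he⟩) else 0, ?_⟩
    refine Eq.trans hc.symm ?_
    rw [Fintype.sum_sum_type]
    refine congrArg₂ (· + ·) ?_ ?_
    · exact Finset.sum_congr rfl fun v _ => by simp only [gens, Sum.elim_inl]
    · conv_rhs => rw [← Finset.sum_coe_sort G.edgeFinset]
      refine Finset.sum_congr rfl fun e _ => ?_
      simp only [gens, Sum.elim_inr, edgePoly, e.2, dite_true, Subtype.coe_eta]
      try rfl
  · -- certificate ⟹ no 3-coloring
    rintro ⟨β, γ, hcert⟩ hcol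
    obtain ⟨C⟩ := hcol
    have hψv : ∀ v : V, eval₂Hom (algebraMap (ZMod 2) Kbar) (fun v => q (C v))
        (MvPolynomial.X v ^ 3 + 1) = 0 := by
      intro v
      rw [map_add, map_pow, eval₂Hom_X', map_one]
      show q (C v) ^ 3 + 1 = 0
      rw [hq3]
      linear_combination h2
    have hψe : ∀ e ∈ G.edgeFinset, eval₂Hom (algebraMap (ZMod 2) Kbar) (fun v => q (C v))
        (Sym2.lift ⟨fun u w =>
            MvPolynomial.X u ^ 2 + MvPolynomial.X u * MvPolynomial.X w +
              MvPolynomial.X w ^ 2,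
          fun u w => by ring⟩ e) = 0 := by
      intro e
      induction e using Sym2.ind with
      | _ u w =>
        intro he
        rw [Sym2.lift_mk, map_add, map_add, map_mul, map_pow, map_pow, eval₂Hom_X', eval₂Hom_X']
        exact hqe (C u) (C w)
          (C.valid ((SimpleGraph.mem_edgeSet G).mp (SimpleGraph.mem_edgeFinset.mp he)))
    have h0 := congrArg (eval₂Hom (algebraMap (ZMod 2) Kbar) (fun v => q (C v))) hcert
    rw [map_one, map_add, map_sum, map_sum,
      Finset.sum_eq_zero (fun v _ => by rw [map_mul, hψv v, mul_zero]),
      Finset.sum_eq_zero (fun e he => by rw [map_mul, hψe e he, mul_zero]), add_zero] at h0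
    exact one_ne_zero h0
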